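/- Let α, β ∈ ℝ and a > 0. Let V be a real separable Banach space embedded in H by an injective continuous linear map with dense range (identify V with its image in H), and assume V ∩ X is dense in X. Let A be an α-maximal monotone operator on H with D(A) ⊆ V, and assume: (c) (y₁ − y₂, x₁ − x₂) + β|x₁ − x₂|² ≥ a‖x₁ − x₂‖_V² for all (x₁,y₁), (x₂,y₂) ∈ A; (d) there exist h₀ ∈ V and r₀ > 0 such that for every e ∈ V ∩ X with ‖e‖_X = 1 one has h₀ + r₀e ∈ D(A) and ‖A⁰(h₀ + r₀e)‖_{V*} ≤ r₀, where A⁰x denotes the element of minimal H-norm of Ax and ‖y‖_{V*} := sup{ (y, v) : v ∈ V, ‖v‖_V ≤ 1 }. Then there exist constants r₀', a₁, a₂ > 0 such that r₀'‖y‖_{X*} ≤ (y, x − h₀) + a₁|x|² + a₂ for all (x,y) ∈ A; that is, A satisfies condition (H₁-ii). -/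

import Mathlib

open MeasureTheory Set Filter
open scoped RealInnerProductSpace Topology NNReal

noncomputable section

variable {H : Type*} [NormedAddCommGroup H] [InnerProductSpace ℝ H] [CompleteSpace H]
variable {X : Type*} [NormedAddCommGroup X] [NormedSpace ℝ X]

/-- The dual norm `‖y‖_{X*} = sup { ⟪y, j x⟫ : ‖x‖_X ≤ 1 }` of `y ∈ H`, relative to the
embedding `j : X → H`. -/
def dualNorm (j : X →L[ℝ] H) (y : H) : ℝ :=
  sSup ((fun x : X => ⟪y, j x⟫) '' {x : X | ‖x‖ ≤ 1})

/-- The set of all partition variation sums of `g` on `[0,T]`, with increments measured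
by the gauge `N`. -/
def varSums (N : H → ℝ) (g : ℝ → H) (T : ℝ) : Set ℝ :=
  { v | ∃ m : ℕ, ∃ t : Fin (m + 1) → ℝ, Monotone t ∧ t 0 = 0 ∧ t (Fin.last m) = T ∧
      v = ∑ i : Fin m, N (g (t i.succ) - g (t i.castSucc)) }

/-- `g` has bounded variation on `[0,T]` w.r.t. the gauge `N`. -/
def HasBV (N : H → ℝ) (g : ℝ → H) (T : ℝ) : Prop := BddAbove (varSums N g T)

/-- The total variation (BV norm) of `g` on `[0,T]` w.r.t. the gauge `N`. -/
def bvNorm (N : H → ℝ) (g : ℝ → H) (T : ℝ) : ℝ := sSup (varSums N g T)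

/-- A multivalued operator `A ⊆ H × H` is monotone. -/
def IsMonotoneOp (A : Set (H × H)) : Prop :=
  ∀ p ∈ A, ∀ q ∈ A, 0 ≤ ⟪p.2 - q.2, p.1 - q.1⟫

/-- A multivalued operator `A ⊆ H × H` is maximal monotone. -/
def IsMaximalMonotone (A : Set (H × H)) : Prop :=
  IsMonotoneOp A ∧ ∀ u v : H, (∀ p ∈ A, 0 ≤ ⟪v - p.2, u - p.1⟫) → (u, v) ∈ A

/-- The operator `A + αI`. -/
def addAlphaI (A : Set (H × H)) (α : ℝ) : Set (H × H) :=
  (fun p : H × H => (p.1, p.2 + α • p.1)) '' A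

/-- The domain `D(A)` of a multivalued operator. -/
def opDom (A : Set (H × H)) : Set H := {x | ∃ y, (x, y) ∈ A}

/-- Hypothesis (H₁): `A` is `α`-maximal monotone and satisfies the coercivity-type
inequality with constants `h₀, r₀, a₁, a₂`. -/
def HypH1 (A : Set (H × H)) (j : X →L[ℝ] H) (α : ℝ) (h₀ : H) (r₀ a₁ a₂ : ℝ) : Prop :=
  IsMaximalMonotone (addAlphaI A α) ∧ 0 < r₀ ∧ 0 < a₁ ∧ 0 < a₂ ∧
    ∀ p ∈ A, r₀ * dualNorm j p.2 ≤ ⟪p.2, p.1 - h₀⟫ + a₁ * ‖p.1‖ ^ 2 + a₂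

/-- `f ∈ W^{1,1}([0,T];H)`. -/
def MemW11 (f : ℝ → H) (T : ℝ) : Prop :=
  ∃ f' : ℝ → H, IntegrableOn f' (Icc 0 T) ∧
    ∀ t ∈ Icc (0:ℝ) T, f t = f 0 + ∫ s in (0:ℝ)..t, f' s

/-- `g ∈ W^{2,1}([0,T];H)`. -/
def MemW21 (g : ℝ → H) (T : ℝ) : Prop :=
  ∃ g' : ℝ → H, MemW11 g' T ∧ ∀ t ∈ Icc (0:ℝ) T, g t = g 0 + ∫ s in (0:ℝ)..t, g' s

/-- `(u,η) = GD(A;u₀,f,M)`: generalized deterministic solution of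
`du + Au(dt) ∋ f dt + dM`, `u(0) = u₀`, on `[0,T]`. -/
def IsGDSolution (A : Set (H × H)) (j : X →L[ℝ] H) (T : ℝ)
    (u₀ : H) (f : ℝ → H) (M : ℝ → X) (u η : ℝ → H) : Prop :=
  -- (d₁)
  (ContinuousOn u (Icc 0 T) ∧ (∀ t ∈ Icc (0:ℝ) T, u t ∈ closure (opDom A)) ∧ u 0 = u₀) ∧
  -- (d₂)
  (ContinuousOn η (Icc 0 T) ∧ η 0 = 0 ∧ HasBV (dualNorm j) η T) ∧
  -- (d₃)
  (∀ t ∈ Icc (0:ℝ) T, u t + η t = u₀ + (∫ s in (0:ℝ)..t, f s) + j (M t)) ∧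
  -- (d₄)
  ∃ (u0s : ℕ → H) (fs : ℕ → ℝ → H) (Ms : ℕ → ℝ → X) (us hs : ℕ → ℝ → H),
    (∀ n, u0s n ∈ opDom A) ∧
    (∀ n, MemW11 (fs n) T) ∧
    (∀ n, ContinuousOn (Ms n) (Icc 0 T) ∧ Ms n 0 = 0 ∧ MemW21 (fun t => j (Ms n t)) T) ∧
    (∀ n, ∃ L : ℝ≥0, LipschitzOnWith L (us n) (Icc 0 T)) ∧
    (∀ n, AEStronglyMeasurable (hs n) (volume.restrict (Ioc 0 T)) ∧
          ∃ C : ℝ, ∀ᵐ s ∂(volume.restrict (Ioc (0:ℝ) T)), ‖hs n s‖ ≤ C) ∧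
    (∀ n, ∀ᵐ s ∂(volume.restrict (Ioc (0:ℝ) T)), (us n s, hs n s) ∈ A) ∧
    (∀ n, ∀ t ∈ Icc (0:ℝ) T,
        us n t + (∫ s in (0:ℝ)..t, hs n s) =
          u0s n + (∫ s in (0:ℝ)..t, fs n s) + j (Ms n t)) ∧
    Tendsto u0s atTop (𝓝 u₀) ∧
    Tendsto (fun n => ∫ s in Icc (0:ℝ) T, ‖fs n s - f s‖) atTop (𝓝 0) ∧
    TendstoUniformlyOn Ms M atTop (Icc 0 T) ∧
    TendstoUniformlyOn us u atTop (Icc 0 T) ∧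
    TendstoUniformlyOn (fun n t => ∫ s in (0:ℝ)..t, hs n s) η atTop (Icc 0 T) ∧
    ∃ C : ℝ, ∀ n, ∀ v ∈ varSums (dualNorm j) (fun t => ∫ s in (0:ℝ)..t, hs n s) T, v ≤ C

end

noncomputable section

variable {H : Type*} [NormedAddCommGroup H] [InnerProductSpace ℝ H]

/-- The dual norm `‖y‖_{V*}` of `y ∈ H` relative to the embedding `k : V → H`. -/
def vDualNorm {V : Type*} [NormedAddCommGroup V] [NormedSpace ℝ V]
    (k : V →L[ℝ] H) (y : H) : ℝ :=
  sSup ((fun v : V => ⟪y, k v⟫) '' {v : V | ‖v‖ ≤ 1})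

end

set_option maxHeartbeats 1000000 in
/-- **Theorem 2.2, (H₁-II) ⟹ (H₁-ii).** If `A` is `α`-maximal monotone with
`D(A) ⊆ V` for a separable Banach space `V` densely embedded in `H` with `V ∩ X` dense in
`X`, strengthened monotonicity (c), and the resolvent-type bound (d) on the minimal
sections `A⁰(h₀ + r₀ e)`, then `A` satisfies the coercivity condition (H₁-ii). -/
theorem hypH1_of_intermediate_space
    {H : Type*} [NormedAddCommGroup H] [InnerProductSpace ℝ H] [CompleteSpace H]
    [SecondCountableTopology H]
    {X : Type*} [NormedAddCommGroup X] [NormedSpace ℝ X]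
    [SecondCountableTopology X] [SecondCountableTopology (StrongDual ℝ X)]
    {V : Type*} [NormedAddCommGroup V] [NormedSpace ℝ V] [SecondCountableTopology V]
    (j : X →L[ℝ] H) (hj_inj : Function.Injective j) (hj_dense : DenseRange (⇑j))
    (k : V →L[ℝ] H) (hk_inj : Function.Injective k) (hk_dense : DenseRange (⇑k))
    (hVX : Dense {x : X | j x ∈ Set.range k})
    (α β a : ℝ) (ha : 0 < a)
    (A : Set (H × H)) (hA : IsMaximalMonotone (addAlphaI A α))
    (hdom : opDom A ⊆ Set.range k)
    (hstrong : ∀ (v₁ v₂ : V) (y₁ y₂ : H), (k v₁, y₁) ∈ A → (k v₂, y₂) ∈ A →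
      a * ‖v₁ - v₂‖ ^ 2 ≤ ⟪y₁ - y₂, k v₁ - k v₂⟫ + β * ‖k v₁ - k v₂‖ ^ 2)
    (h₀ : V) (r₀ : ℝ) (hr₀ : 0 < r₀)
    (hd : ∀ e : X, ‖e‖ = 1 → j e ∈ Set.range k →
      ∃ y : H, (k h₀ + r₀ • j e, y) ∈ A ∧
        (∀ y' : H, (k h₀ + r₀ • j e, y') ∈ A → ‖y‖ ≤ ‖y'‖) ∧
        vDualNorm k y ≤ r₀) :
    ∃ r₀' a₁ a₂ : ℝ, 0 < r₀' ∧ 0 < a₁ ∧ 0 < a₂ ∧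
      ∀ p ∈ A, r₀' * dualNorm j p.2 ≤ ⟪p.2, p.1 - k h₀⟫ + a₁ * ‖p.1‖ ^ 2 + a₂ := by
  classical
  set C : ℝ := ‖k h₀‖ + r₀ * ‖j‖ with hCdef
  have hC0 : 0 ≤ C := by positivity
  refine ⟨r₀, 2 * |β| + 1, r₀ ^ 2 / (4 * a) + 2 * |β| * C ^ 2 + 1, hr₀, by positivity,
    by positivity, ?_⟩
  rintro ⟨x, y⟩ hxy
  obtain ⟨v, hv⟩ := hdom ⟨y, hxy⟩
  subst hv
  dsimp only
  set R : ℝ := ⟪y, k v - k h₀⟫ + (2 * |β| + 1) * ‖k v‖ ^ 2 +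
      (r₀ ^ 2 / (4 * a) + 2 * |β| * C ^ 2 + 1) with hRdef
  -- Key inequality for unit vectors `e` with `j e ∈ range k`.
  have key : ∀ e : X, ‖e‖ = 1 → j e ∈ Set.range k → r₀ * ⟪y, j e⟫ ≤ R := by
    intro e he hek
    obtain ⟨z, hz, -, hzV⟩ := hd e he hek
    obtain ⟨vw, hvw⟩ := hdom ⟨z, hz⟩
    -- bound `⟪z, k u⟫ ≤ r₀ ‖u‖` from the `V*` dual norm bound
    have hzbd : ∀ u : V, ⟪z, k u⟫ ≤ r₀ * ‖u‖ := by
      intro u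
      rcases eq_or_ne u 0 with rfl | hu
      · simp [hr₀.le]
      · have hu0 : (0:ℝ) < ‖u‖ := norm_pos_iff.mpr hu
        have hnorm : ‖(‖u‖⁻¹ • u : V)‖ = 1 := by
          rw [norm_smul, norm_inv, norm_norm, inv_mul_cancel₀ hu0.ne']
        have hmem : ⟪z, k (‖u‖⁻¹ • u)⟫ ∈ (fun w : V => ⟪z, k w⟫) '' {w : V | ‖w‖ ≤ 1} :=
          ⟨_, le_of_eq hnorm, rfl⟩
        have hbdd : BddAbove ((fun w : V => ⟪z, k w⟫) '' {w : V | ‖w‖ ≤ 1}) := by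
          refine ⟨‖z‖ * ‖k‖, ?_⟩
          rintro _ ⟨w, hw1, rfl⟩
          calc ⟪z, k w⟫ ≤ ‖z‖ * ‖k w‖ := real_inner_le_norm _ _
            _ ≤ ‖z‖ * (‖k‖ * ‖w‖) := by
                exact mul_le_mul_of_nonneg_left (k.le_opNorm w) (norm_nonneg z)
            _ ≤ ‖z‖ * (‖k‖ * 1) := by
                have := mul_le_mul_of_nonneg_left hw1 (norm_nonneg (k : V →L[ℝ] H))
                exact mul_le_mul_of_nonneg_left this (norm_nonneg z)
            _ = ‖z‖ * ‖k‖ := by ring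
        have h1 : ⟪z, k (‖u‖⁻¹ • u)⟫ ≤ r₀ := le_trans (le_csSup hbdd hmem) hzV
        have h2 : ⟪z, k u⟫ = ‖u‖ * ⟪z, k (‖u‖⁻¹ • u)⟫ := by
          rw [ContinuousLinearMap.map_smul, real_inner_smul_right]
          field_simp
        rw [h2, mul_comm r₀ ‖u‖]
        exact mul_le_mul_of_nonneg_left h1 (norm_nonneg u)
    have hmono := hstrong v vw y z hxy (by rw [hvw]; exact hz)
    -- expand inner products
    have e1 : ⟪y - z, k v - k vw⟫ =
        (⟪y, k v⟫ - ⟪y, k vw⟫) - (⟪z, k v⟫ - ⟪z, k vw⟫) := by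
      simp [inner_sub_left, inner_sub_right]; ring
    have e2 : ⟪z, k (vw - v)⟫ = ⟪z, k vw⟫ - ⟪z, k v⟫ := by
      simp [inner_sub_right]
    have e3 : r₀ * ⟪y, j e⟫ = ⟪y, k vw⟫ - ⟪y, k h₀⟫ := by
      rw [hvw]
      simp [inner_add_right, real_inner_smul_right]
    have e4 : ⟪y, k v - k h₀⟫ = ⟪y, k v⟫ - ⟪y, k h₀⟫ := by
      simp [inner_sub_right]
    have step2 : ⟪z, k vw⟫ - ⟪z, k v⟫ ≤ r₀ * ‖v - vw‖ := by
      have := hzbd (vw - v)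
      rw [e2, norm_sub_rev] at this
      exact this
    have step3 : r₀ * ‖v - vw‖ - a * ‖v - vw‖ ^ 2 ≤ r₀ ^ 2 / (4 * a) := by
      rw [le_div_iff₀ (by linarith : (0:ℝ) < 4 * a)]
      nlinarith [sq_nonneg (2 * a * ‖v - vw‖ - r₀)]
    have hkw : ‖k vw‖ ≤ C := by
      rw [hvw, hCdef]
      calc ‖k h₀ + r₀ • j e‖ ≤ ‖k h₀‖ + ‖r₀ • j e‖ := norm_add_le _ _
        _ = ‖k h₀‖ + r₀ * ‖j e‖ := by rw [norm_smul, Real.norm_of_nonneg hr₀.le]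
        _ ≤ ‖k h₀‖ + r₀ * ‖j‖ := by
            have h1 : ‖j e‖ ≤ ‖j‖ := by
              have := j.le_opNorm e; rwa [he, mul_one] at this
            nlinarith [hr₀.le]
    have hd2 : ‖k v - k vw‖ ^ 2 ≤ 2 * ‖k v‖ ^ 2 + 2 * C ^ 2 := by
      have h5 : ‖k v - k vw‖ ≤ ‖k v‖ + C := by
        calc ‖k v - k vw‖ ≤ ‖k v‖ + ‖k vw‖ := norm_sub_le _ _
          _ ≤ ‖k v‖ + C := by linarith
      nlinarith [norm_nonneg (k v - k vw), norm_nonneg (k v), sq_nonneg (‖k v‖ - C)]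
    have step4 : β * ‖k v - k vw‖ ^ 2 ≤ 2 * |β| * ‖k v‖ ^ 2 + 2 * |β| * C ^ 2 := by
      nlinarith [le_abs_self β, abs_nonneg β, sq_nonneg (‖k v - k vw‖), hd2]
    rw [e1] at hmono
    rw [e3, hRdef, e4]
    linarith [sq_nonneg (‖k v‖)]
  -- Scale to all vectors in the dense subspace, then extend by density.
  have keyAll : ∀ w : X, r₀ * ⟪y, j w⟫ ≤ ‖w‖ * R := by
    have hsub : {x : X | j x ∈ Set.range k} ⊆ {w : X | r₀ * ⟪y, j w⟫ ≤ ‖w‖ * R} := by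
      intro w hw
      rcases eq_or_ne w 0 with rfl | hw0
      · simp
      · have hwpos : (0:ℝ) < ‖w‖ := norm_pos_iff.mpr hw0
        have hne : ‖(‖w‖⁻¹ • w : X)‖ = 1 := by
          rw [norm_smul, norm_inv, norm_norm, inv_mul_cancel₀ hwpos.ne']
        have hek : j (‖w‖⁻¹ • w) ∈ Set.range k := by
          obtain ⟨u, hu⟩ := hw
          exact ⟨‖w‖⁻¹ • u, by rw [ContinuousLinearMap.map_smul, ContinuousLinearMap.map_smul, hu]⟩
        have hkey := key _ hne hek
        rw [ContinuousLinearMap.map_smul, real_inner_smul_right] at hkey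
        have := mul_le_mul_of_nonneg_left hkey hwpos.le
        calc r₀ * ⟪y, j w⟫ = ‖w‖ * (r₀ * (‖w‖⁻¹ * ⟪y, j w⟫)) := by
              field_simp
          _ ≤ ‖w‖ * R := this
    have hclosed : IsClosed {w : X | r₀ * ⟪y, j w⟫ ≤ ‖w‖ * R} := by
      apply isClosed_le
      · exact continuous_const.mul ((innerSL ℝ y).continuous.comp j.continuous)
      · exact continuous_norm.mul continuous_const
    intro w
    have h1 : closure {x : X | j x ∈ Set.range k} ⊆
        {w : X | r₀ * ⟪y, j w⟫ ≤ ‖w‖ * R} := hclosed.closure_subset_iff.mpr hsub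
    have h2 := hVX.closure_eq
    rw [h2] at h1
    exact h1 (Set.mem_univ w)
  -- R is nonnegative
  have hRnn : 0 ≤ R := by
    by_cases hX : ∃ w : X, w ≠ 0
    · obtain ⟨w, hw0⟩ := hX
      have hwpos : (0:ℝ) < ‖w‖ := norm_pos_iff.mpr hw0
      have h1 := keyAll w
      have h2 := keyAll (-w)
      rw [map_neg, inner_neg_right, norm_neg] at h2
      by_contra hR
      push_neg at hR
      nlinarith [mul_pos hwpos (neg_pos.mpr hR)]
    · push_neg at hX
      have hrange : Set.range (⇑j) = {0} := by
        apply Set.eq_singleton_iff_unique_mem.mpr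
        refine ⟨⟨0, map_zero j⟩, ?_⟩
        rintro _ ⟨w, rfl⟩
        rw [hX w, map_zero]
      have hH : ∀ h : H, h = 0 := by
        intro h
        have hm : h ∈ closure (Set.range (⇑j)) := by
          rw [hj_dense.closure_eq]; trivial
        rw [hrange, closure_singleton] at hm
        simpa using hm
      rw [hRdef, hH y, hH (k v)]
      simp only [inner_zero_left, norm_zero]
      positivity
  -- Conclude via the sup
  have hsup : dualNorm j y ≤ R / r₀ := by
    unfold dualNorm
    apply Real.sSup_le
    · rintro _ ⟨w, hw1, rfl⟩
      rw [le_div_iff₀ hr₀]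
      have h1 := keyAll w
      have hw1' : ‖w‖ ≤ 1 := hw1
      have h2 : ‖w‖ * R ≤ R := by nlinarith
      linarith
    · exact div_nonneg hRnn hr₀.le
  calc r₀ * dualNorm j y ≤ r₀ * (R / r₀) := mul_le_mul_of_nonneg_left hsup hr₀.le
    _ = R := by field_simp
    _ = _ := by rw [hRdef]
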